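/- For every natural number k, the generating function identity ∏_{j=0}^{k} (1 - q^{j} x) · ∑_{n ≥ 0} QB_s(n,k) x^{n} = x^{k} q^{k(k-1)/2} ∏_{j=0}^{k-1} (1 + q^{j}x + (q^{j}x)^{2} + ⋯ + (q^{j}x)^{s-1}) holds in the ring of formal power series in x over the field ℚ(q). -/

import Mathlib

/-- The q-quasi-bi^s-nomial coefficients `QB_s(n,k) ∈ ℚ(q)` (here `q = RatFunc.X`). -/
noncomputable def QB (s : ℕ) : ℕ → ℤ → RatFunc ℚ
  | 0, k => if k = 0 then 1 else 0
  | n+1, k =>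
    if k < 0 ∨ (n+1 : ℤ) < k then 0
    else QB s n k +
      ∑ j ∈ Finset.range s, if j ≤ n then RatFunc.X ^ (n - j) * QB s (n - j) (k - 1) else 0
  termination_by n _ => n
  decreasing_by all_goals omega

open PowerSeries Finset

local notation "q" => (RatFunc.X : RatFunc ℚ)
local notation "𝓡" => RatFunc ℚ

lemma QB_eq_zero (s : ℕ) : ∀ (n : ℕ) (k : ℤ), (k < 0 ∨ (n : ℤ) < k) → QB s n k = 0 := by
  intro n
  induction n with
  | zero => intro k h; rw [QB]; rw [if_neg]; omega
  | succ n ih => intro k h; rw [QB]; rw [if_pos]; push_cast at h ⊢; omega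

lemma QB_succ (s n : ℕ) (k : ℤ) (hk : 0 ≤ k) :
    QB s (n+1) k = QB s n k +
      ∑ j ∈ Finset.range s, if j ≤ n then RatFunc.X ^ (n - j) * QB s (n - j) (k - 1) else 0 := by
  rw [QB]
  by_cases h : ((n:ℤ)+1) < k
  · rw [if_pos (by omega)]
    rw [QB_eq_zero s n k (Or.inr (by omega))]
    rw [Finset.sum_congr rfl (fun j hj => ?_), Finset.sum_const_zero, add_zero]
    split_ifs with hj'
    · rw [QB_eq_zero s (n-j) (k-1) (Or.inr (by omega)), mul_zero]
    · rfl
  · rw [if_neg (by omega)]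

lemma rescale_C' (a b : 𝓡) : rescale a (C b) = C b := by
  ext n
  simp only [coeff_rescale, coeff_C]
  rcases n with _ | n <;> simp

lemma rescale_CX (a b : 𝓡) : rescale a (C b * X) = C (a * b) * X := by
  rw [map_mul, rescale_C', rescale_X, map_mul]
  ring

/-- Key recurrence at the level of power series. -/
lemma QB_key (s k : ℕ) :
    (1 - X) * PowerSeries.mk (fun n => QB s n (k : ℤ)) =
      (if k = 0 then 1 else 0) +
      X * (∑ i ∈ Finset.range s, (X : 𝓡⟦X⟧) ^ i) *
        rescale q (PowerSeries.mk fun n => QB s n ((k : ℤ) - 1)) := by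
  ext n
  rw [sub_mul, one_mul, map_sub, map_add]
  rw [mul_assoc, rescale_mk]
  rcases n with _ | n
  · simp only [coeff_zero_X_mul, coeff_mk]
    rw [QB]
    simp only [Nat.cast_eq_zero]
    split_ifs with h <;> simp [h]
  · rw [coeff_succ_X_mul, coeff_succ_X_mul, coeff_mk, coeff_mk]
    rw [Finset.sum_mul]
    have hmain : QB s (n+1) (k:ℤ) = QB s n (k:ℤ) +
        ∑ j ∈ Finset.range s, if j ≤ n then RatFunc.X ^ (n - j) * QB s (n - j) ((k:ℤ) - 1) else 0 :=
      QB_succ s n k (by positivity)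
    have hsum : (coeff n) (∑ i ∈ Finset.range s, (X:𝓡⟦X⟧) ^ i * PowerSeries.mk fun m => q ^ m * QB s m ((k:ℤ)-1)) =
        ∑ j ∈ Finset.range s, if j ≤ n then RatFunc.X ^ (n - j) * QB s (n - j) ((k:ℤ) - 1) else 0 := by
      rw [map_sum]
      refine Finset.sum_congr rfl fun i _ => ?_
      rw [coeff_X_pow_mul']
      split_ifs with h
      · rw [coeff_mk]
      · rfl
    rw [hsum, hmain]
    have : (coeff (n+1)) (if k = 0 then (1 : 𝓡⟦X⟧) else 0) = 0 := by
      split_ifs <;> simp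
    rw [this]
    ring

/-- Generating function of the q-quasi-bi^s-nomial coefficients: in `ℚ(q)[[x]]`,
`∏_{j=0}^{k} (1 - q^j x) ⬝ ∑_{n≥0} QB_s(n,k) x^n
  = x^k q^{k(k-1)/2} ∏_{j=0}^{k-1} (1 + q^j x + (q^j x)² + ⋯ + (q^j x)^{s-1})`. -/
theorem QB_generating_function (s k : ℕ) (hs : 1 ≤ s) :
    (∏ j ∈ Finset.range (k + 1),
        (1 - PowerSeries.C (R := RatFunc ℚ) (RatFunc.X ^ j) * PowerSeries.X)) *
        PowerSeries.mk (fun n => QB s n (k : ℤ)) =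
      PowerSeries.C (R := RatFunc ℚ) (RatFunc.X ^ (k * (k - 1) / 2)) *
        (PowerSeries.X : PowerSeries (RatFunc ℚ)) ^ k *
        ∏ j ∈ Finset.range k,
          (∑ i ∈ Finset.range s,
            (PowerSeries.C (R := RatFunc ℚ) (RatFunc.X ^ j) * PowerSeries.X) ^ i) := by
  induction k with
  | zero =>
      simp only [zero_add, Finset.prod_range_one, pow_zero, map_one, one_mul,
        Finset.range_zero, Finset.prod_empty, mul_one]
      have h0 := QB_key s 0
      rw [if_pos rfl] at h0
      have hz : (PowerSeries.mk fun n => QB s n (((0:ℕ):ℤ) - 1)) = 0 := by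
        ext n
        simp only [coeff_mk, map_zero]
        exact QB_eq_zero s n _ (Or.inl (by omega))
      rw [hz, map_zero, mul_zero, add_zero] at h0
      simpa using h0
  | succ k ih =>
      -- split off the j = 0 factor
      have hprod : (∏ j ∈ Finset.range (k + 1 + 1),
          (1 - C (q ^ j) * X)) =
          (∏ j ∈ Finset.range (k+1), (1 - C (q ^ (j+1)) * X)) * (1 - X) := by
        rw [Finset.prod_range_succ']
        simp
      have hres : (∏ j ∈ Finset.range (k+1), (1 - C (q ^ (j+1)) * X)) =
          rescale q (∏ j ∈ Finset.range (k+1), (1 - C (q ^ j) * X)) := by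
        rw [map_prod]
        refine Finset.prod_congr rfl fun j _ => ?_
        rw [map_sub, map_one, rescale_CX, ← pow_succ']
      have hkey := QB_key s (k+1)
      rw [if_neg (Nat.succ_ne_zero k)] at hkey
      rw [show ((k+1:ℕ):ℤ) - 1 = (k:ℤ) by push_cast; ring] at hkey
      rw [zero_add] at hkey
      calc (∏ j ∈ Finset.range (k + 1 + 1), (1 - C (q ^ j) * X)) * PowerSeries.mk (fun n => QB s n ((k+1:ℕ):ℤ))
          = (∏ j ∈ Finset.range (k+1), (1 - C (q ^ (j+1)) * X)) *
              ((1 - X) * PowerSeries.mk (fun n => QB s n ((k+1:ℕ):ℤ))) := by rw [hprod]; ring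
        _ = rescale q (∏ j ∈ Finset.range (k+1), (1 - C (q ^ j) * X)) *
              (X * (∑ i ∈ Finset.range s, (X:𝓡⟦X⟧) ^ i) *
                rescale q (PowerSeries.mk fun n => QB s n (k:ℤ))) := by rw [hres, hkey]
        _ = X * (∑ i ∈ Finset.range s, (X:𝓡⟦X⟧) ^ i) *
              rescale q ((∏ j ∈ Finset.range (k+1), (1 - C (q ^ j) * X)) *
                PowerSeries.mk fun n => QB s n (k:ℤ)) := by rw [map_mul]; ring
        _ = X * (∑ i ∈ Finset.range s, (X:𝓡⟦X⟧) ^ i) *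
              rescale q (C (q ^ (k * (k - 1) / 2)) * X ^ k *
                ∏ j ∈ Finset.range k, (∑ i ∈ Finset.range s, (C (q ^ j) * X) ^ i)) := by
              rw [ih]
        _ = C (q ^ ((k+1) * (k + 1 - 1) / 2)) * X ^ (k+1) *
              ∏ j ∈ Finset.range (k+1), (∑ i ∈ Finset.range s, (C (q ^ j) * X) ^ i) := by
              rw [map_mul, map_mul, rescale_C', map_pow (rescale q) (X : 𝓡⟦X⟧) k, rescale_X, map_prod]
              have hres2 : ∀ j ∈ Finset.range k,
                  rescale q (∑ i ∈ Finset.range s, (C (q ^ j) * X) ^ i) =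
                  ∑ i ∈ Finset.range s, (C (q ^ (j+1)) * X) ^ i := by
                intro j _
                rw [map_sum]
                refine Finset.sum_congr rfl fun i _ => ?_
                rw [map_pow, rescale_CX, ← pow_succ']
              rw [Finset.prod_congr rfl hres2]
              rw [Finset.prod_range_succ']
              have hexp : (k+1) * (k + 1 - 1) / 2 = k * (k - 1) / 2 + k := by
                rw [← Finset.sum_range_id, ← Finset.sum_range_id, Finset.sum_range_succ]
              rw [hexp, pow_add, map_mul, mul_pow, ← map_pow]
              simp only [pow_zero, map_one, one_mul]
              ring
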